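/- Let s ∈ ℂ with Im s < 0 and let λ ∈ ℝ. Then the integral ∫_{ℝ} (e^{t} + e^{−t})^{−is} e^{−iλt} dt converges absolutely and π^{−is} Γ(is) · 2 ∫_{ℝ} (e^{t} + e^{−t})^{−is} e^{−iλt} dt = π^{−(is−iλ)/2} Γ( (is − iλ)/2 ) · π^{−(is+iλ)/2} Γ( (is + iλ)/2 ), where (e^{t}+e^{−t})^{−is} = exp(−is·log(e^{t}+e^{−t})) and Γ is the complex Gamma function. -/

import Mathlib

open MeasureTheory

/-- The universal Baxter element of the spherical Hecke algebra of split `SO₂`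
acts on the spherical principal series by multiplication by the local
Archimedean `L`-factor: for `Im s < 0` and `λ ∈ ℝ`, the integral
`∫ (e^{t}+e^{−t})^{−is} e^{−iλt} dt` converges absolutely and
`π^{−is} Γ(is) · 2 ∫ (e^{t}+e^{−t})^{−is} e^{−iλt} dt
 = π^{−(is−iλ)/2} Γ((is−iλ)/2) · π^{−(is+iλ)/2} Γ((is+iλ)/2)`,
where `(e^{t}+e^{−t})^{−is} = exp(−is·log(e^{t}+e^{−t}))`. -/
theorem SO2_baxter_L_factor (s : ℂ) (hs : s.im < 0) (lam : ℝ) :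
    Integrable (fun t : ℝ =>
      Complex.exp (-(Complex.I * s) * (Real.log (Real.exp t + Real.exp (-t)) : ℂ)) *
        Complex.exp (-Complex.I * lam * t)) ∧
    (Real.pi : ℂ) ^ (-(Complex.I * s)) * Complex.Gamma (Complex.I * s) *
      (2 * ∫ t : ℝ,
        Complex.exp (-(Complex.I * s) * (Real.log (Real.exp t + Real.exp (-t)) : ℂ)) *
          Complex.exp (-Complex.I * lam * t))
    = (Real.pi : ℂ) ^ (-(Complex.I * s - Complex.I * lam)/2) *
        Complex.Gamma ((Complex.I * s - Complex.I * lam)/2) *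
      ((Real.pi : ℂ) ^ (-(Complex.I * s + Complex.I * lam)/2) *
        Complex.Gamma ((Complex.I * s + Complex.I * lam)/2)) := by
  set a : ℂ := Complex.I * s with ha_def
  set b : ℂ := Complex.I * (lam : ℂ) with hb_def
  have ha : 0 < a.re := by
    simp only [ha_def, Complex.mul_re, Complex.I_re, Complex.I_im]
    simpa using hs
  have hb : b.re = 0 := by
    simp [hb_def, Complex.mul_re]
  set p : ℂ := (a - b)/2 with hp_def
  set q : ℂ := (a + b)/2 with hq_def
  have hp : 0 < p.re := by
    simp only [hp_def, Complex.div_re, Complex.sub_re, hb]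
    simp [Complex.normSq]
    positivity
  have hq : 0 < q.re := by
    simp only [hq_def, Complex.div_re, Complex.add_re, hb]
    simp [Complex.normSq]
    positivity
  set f : ℝ → ℂ := fun t =>
      Complex.exp (-a * (Real.log (Real.exp t + Real.exp (-t)) : ℂ)) *
        Complex.exp (-Complex.I * lam * t) with hf_def
  set c : ℝ → ℝ := fun t => Real.exp t + Real.exp (-t) with hc_def
  have hc : ∀ t, 0 < c t := fun t => by positivity
  set φ : ℝ → ℝ := fun t => Real.exp t / c t with hφ_def
  have hφ0 : ∀ t, 0 < φ t := fun t => div_pos (Real.exp_pos t) (hc t)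
  have hφ1 : ∀ t, φ t < 1 := fun t => by
    rw [hφ_def, div_lt_one (hc t)]
    simp only [hc_def, lt_add_iff_pos_right]
    exact Real.exp_pos _
  have h1φ : ∀ t, 1 - φ t = Real.exp (-t) / c t := fun t => by
    rw [hφ_def, eq_div_iff (hc t).ne']
    simp only [hc_def]
    field_simp
    ring
  have hderiv : ∀ t, HasDerivAt φ (2 / (c t)^2) t := by
    intro t
    have h1 : HasDerivAt (fun t : ℝ => Real.exp (-t)) (-Real.exp (-t)) t := by
      exact ((Real.hasDerivAt_exp (-t)).comp t (hasDerivAt_neg t)).congr_deriv (by ring)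
    have h2 : HasDerivAt c (Real.exp t - Real.exp (-t)) t := by
      rw [sub_eq_add_neg]; exact (Real.hasDerivAt_exp t).add h1
    have := (Real.hasDerivAt_exp t).div h2 (hc t).ne'
    convert this using 1
    · rfl
    · rfl
    · funext x
      simp only [hφ_def, Pi.div_apply]
    have he : Real.exp t * Real.exp (-t) = 1 := by
      rw [← Real.exp_add]; simp
    rw [div_left_inj' (pow_pos (hc t) 2).ne']
    simp only [hc_def]
    nlinarith [he]
  have hinj : Set.InjOn φ Set.univ :=
    (strictMono_of_hasDerivAt_pos hderiv fun t => by positivity).injective.injOn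
  have hrange : φ '' Set.univ = Set.Ioo (0:ℝ) 1 := by
    rw [Set.image_univ]
    ext u
    constructor
    · rintro ⟨t, rfl⟩; exact ⟨hφ0 t, hφ1 t⟩
    · rintro ⟨hu0, hu1⟩
      have h1u : (0:ℝ) < 1 - u := by linarith
      set r : ℝ := Real.sqrt (u / (1 - u)) with hr_def
      have hr : 0 < r := Real.sqrt_pos.2 (div_pos hu0 h1u)
      have hr2 : r ^ 2 = u / (1 - u) := Real.sq_sqrt (div_pos hu0 h1u).le
      refine ⟨Real.log r, ?_⟩
      have he1 : Real.exp (Real.log r) = r := Real.exp_log hr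
      have he2 : Real.exp (-Real.log r) = r⁻¹ := by
        rw [Real.exp_neg, he1]
      simp only [hφ_def, hc_def, he1, he2]
      rw [div_eq_iff (by positivity)]
      have : r ^ 2 * (1 - u) = u := by
        rw [hr2]; field_simp
      field_simp
      nlinarith [this]
  set g : ℝ → ℂ := fun x => (x:ℂ) ^ (p - 1) * (1 - (x:ℂ)) ^ (q - 1) with hg_def
  have cpow_pos : ∀ (x : ℝ), 0 < x → ∀ w : ℂ,
      (x:ℂ) ^ w = Complex.exp (w * (Real.log x : ℂ)) := by
    intro x hx w
    rw [Complex.cpow_def_of_ne_zero (by exact_mod_cast hx.ne'), Complex.ofReal_log hx.le,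
      mul_comm]
  -- pointwise identity
  have key : ∀ t : ℝ, |2 / (c t)^2| • g (φ t) = 2 * f t := by
    intro t
    set L : ℝ := Real.log (c t) with hL_def
    have hlogφ : Real.log (φ t) = t - L := by
      rw [hφ_def]
      simp only
      rw [Real.log_div (Real.exp_ne_zero t) (hc t).ne', Real.log_exp]
    have hlog1φ : Real.log (1 - φ t) = -t - L := by
      rw [h1φ t, Real.log_div (Real.exp_ne_zero (-t)) (hc t).ne', Real.log_exp]
    have h1 : ((φ t : ℝ) : ℂ) ^ (p - 1) = Complex.exp ((p - 1) * ((t:ℂ) - (L:ℂ))) := by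
      rw [cpow_pos _ (hφ0 t), hlogφ]
      push_cast
      ring_nf
    have hcast : (1 : ℂ) - ((φ t : ℝ) : ℂ) = ((1 - φ t : ℝ) : ℂ) := by push_cast; ring
    have h2 : ((1:ℂ) - ((φ t : ℝ):ℂ)) ^ (q - 1)
        = Complex.exp ((q - 1) * (-(t:ℂ) - (L:ℂ))) := by
      rw [hcast, cpow_pos _ (by linarith [hφ1 t]), hlog1φ]
      push_cast
      ring_nf
    have habs : |2 / (c t)^2| = 2 / (c t)^2 := abs_of_pos (by positivity)
    have hcL : ((c t : ℝ) : ℂ) = Complex.exp (L:ℂ) := by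
      rw [hL_def, ← Complex.ofReal_exp, Real.exp_log (hc t)]
    rw [hg_def]
    simp only
    rw [h1, h2, habs, Complex.real_smul]
    push_cast
    rw [hcL, hf_def]
    simp only
    have hL' : (Real.log (Real.exp t + Real.exp (-t)) : ℂ) = (L:ℂ) := by
      rw [hL_def, hc_def]
    rw [hL']
    rw [← Complex.exp_add, ← Complex.exp_add, ← Complex.exp_nat_mul]
    rw [div_mul_eq_mul_div, div_eq_iff (Complex.exp_ne_zero _), mul_assoc,
      ← Complex.exp_add]
    norm_num
    congr 1
    rw [hp_def, hq_def, hb_def]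
    ring
  -- the Jacobian change of variables
  have hder' : ∀ t ∈ Set.univ, HasDerivWithinAt φ (2 / (c t)^2) Set.univ t :=
    fun t _ => (hderiv t).hasDerivWithinAt
  have hchg :
      ∫ x in φ '' Set.univ, g x = ∫ t, |2 / (c t)^2| • g (φ t) := by
    rw [integral_image_eq_integral_abs_deriv_smul MeasurableSet.univ hder' hinj g,
      Measure.restrict_univ]
  have hbeta : Complex.betaIntegral p q = 2 * ∫ t, f t := by
    rw [Complex.betaIntegral, intervalIntegral.integral_of_le zero_le_one,
      integral_Ioc_eq_integral_Ioo]
    have : ∫ x in Set.Ioo (0:ℝ) 1, (x:ℂ) ^ (p-1) * (1 - (x:ℂ)) ^ (q-1)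
        = ∫ x in φ '' Set.univ, g x := by rw [hrange]
    rw [this, hchg]
    rw [show (fun t => |2 / (c t)^2| • g (φ t)) = fun t => 2 * f t from funext key]
    rw [integral_const_mul]
  -- integrability
  have hgint : IntegrableOn g (φ '' Set.univ) := by
    rw [hrange]
    have := (Complex.betaIntegral_convergent hp hq)
    rw [intervalIntegrable_iff_integrableOn_Ioc_of_le zero_le_one] at this
    exact this.mono_set Set.Ioo_subset_Ioc_self
  have hfint : Integrable f := by
    have h2f : Integrable (fun t => |2 / (c t)^2| • g (φ t)) := by
      have := (integrableOn_image_iff_integrableOn_abs_deriv_smul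
        MeasurableSet.univ hder' hinj g).mp hgint
      rwa [integrableOn_univ] at this
    have : Integrable (fun t => 2 * f t) := by
      rwa [show (fun t => 2 * f t) = fun t => |2 / (c t)^2| • g (φ t) from
        (funext key).symm]
    have h := this.const_mul (2:ℂ)⁻¹
    simpa [← mul_assoc] using h
  refine ⟨hfint, ?_⟩
  have hΓ : Complex.Gamma p * Complex.Gamma q
      = Complex.Gamma a * Complex.betaIntegral p q := by
    rw [Complex.Gamma_mul_Gamma_eq_betaIntegral hp hq]
    congr 2
    rw [hp_def, hq_def]; ring
  have hπ' : (Real.pi : ℂ) ^ (-p) * (Real.pi : ℂ) ^ (-q) = (Real.pi : ℂ) ^ (-a) := by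
    rw [← Complex.cpow_add _ _ (by exact_mod_cast Real.pi_ne_zero)]
    congr 1
    rw [hp_def, hq_def]; ring
  have e1 : (-(a - b)/2 : ℂ) = -p := by rw [hp_def]; ring
  have e2 : (-(a + b)/2 : ℂ) = -q := by rw [hq_def]; ring
  rw [← hbeta, e1, e2]
  linear_combination (-((Real.pi:ℂ)^(-p) * (Real.pi:ℂ)^(-q))) * hΓ
    - (Complex.Gamma a * Complex.betaIntegral p q) * hπ'
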